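/- arXiv:1305.2303 — 3 statements merged into one kernel-verified Lean document; each statement's English description precedes it below -/
import Mathlib

section
/- Let B ∈ C²((0,∞)) satisfy B, B', B'' > 0 on (0,∞), and let H ∈ C²(ℝⁿ \ {0}) be positively homogeneous of degree 1 with H > 0 on ℝⁿ \ {0}. Then the Hessian of B ∘ H is positive definite at every ξ ≠ 0 if and only if for every ξ ∈ Sⁿ⁻¹ the restriction of Hess H(ξ) to the orthogonal complement ξ^⊥ is positive definite (as a quadratic form on ξ^⊥). -/
open scoped RealInnerProductSpace

open Filter

noncomputable section HessAux

variable {n : ℕ} {H : EuclideanSpace ℝ (Fin n) → ℝ} {B : ℝ → ℝ}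

lemma B_diff (hB : ContDiffOn ℝ 2 B (Set.Ioi 0)) {s : ℝ} (hs : 0 < s) :
    DifferentiableAt ℝ B s :=
  (hB.contDiffAt (Ioi_mem_nhds hs)).differentiableAt (by norm_num)

lemma derivB_diff (hB : ContDiffOn ℝ 2 B (Set.Ioi 0)) {s : ℝ} (hs : 0 < s) :
    DifferentiableAt ℝ (deriv B) s :=
  ((hB.deriv_of_isOpen isOpen_Ioi (m := 1) (by norm_num)).contDiffAt
    (Ioi_mem_nhds hs)).differentiableAt (by norm_num)

section HSmooth

variable (hH : ContDiffOn ℝ 2 H {x : EuclideanSpace ℝ (Fin n) | x ≠ 0})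
include hH

lemma H_contDiffAt {ξ : EuclideanSpace ℝ (Fin n)} (hξ : ξ ≠ 0) : ContDiffAt ℝ 2 H ξ :=
  hH.contDiffAt (isOpen_ne.mem_nhds hξ)

lemma H_diff {ξ : EuclideanSpace ℝ (Fin n)} (hξ : ξ ≠ 0) : DifferentiableAt ℝ H ξ :=
  (H_contDiffAt hH hξ).differentiableAt (by norm_num)

lemma fderivH_hasFDerivAt {ξ : EuclideanSpace ℝ (Fin n)} (hξ : ξ ≠ 0) :
    HasFDerivAt (fderiv ℝ H) (fderiv ℝ (fderiv ℝ H) ξ) ξ :=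
  (((H_contDiffAt hH hξ).fderiv_right (m := 1)
    (by norm_num)).differentiableAt (by norm_num)).hasFDerivAt

lemma hasFDerivAt_fderiv_apply {ξ : EuclideanSpace ℝ (Fin n)} (hξ : ξ ≠ 0)
    (v : EuclideanSpace ℝ (Fin n)) :
    HasFDerivAt (fun x => fderiv ℝ H x v)
      ((fderiv ℝ (fderiv ℝ H) ξ).flip v) ξ := by
  have h := (ContinuousLinearMap.apply ℝ ℝ v).hasFDerivAt.comp ξ
    (fderivH_hasFDerivAt hH hξ)
  exact h.congr_fderiv (by ext w; simp)

lemma hessH_eq {ξ : EuclideanSpace ℝ (Fin n)} (hξ : ξ ≠ 0) (v : EuclideanSpace ℝ (Fin n)) :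
    fderiv ℝ (fun x => fderiv ℝ H x v) ξ = (fderiv ℝ (fderiv ℝ H) ξ).flip v :=
  (hasFDerivAt_fderiv_apply hH hξ v).fderiv

lemma hessH_symm {ξ : EuclideanSpace ℝ (Fin n)} (hξ : ξ ≠ 0) (v w : EuclideanSpace ℝ (Fin n)) :
    fderiv ℝ (fderiv ℝ H) ξ v w = fderiv ℝ (fderiv ℝ H) ξ w v :=
  (H_contDiffAt hH hξ).isSymmSndFDerivAt (by norm_num) v w

variable (hhom : ∀ t : ℝ, 0 < t → ∀ ξ : EuclideanSpace ℝ (Fin n), ξ ≠ 0 →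
      H (t • ξ) = t * H ξ)
include hhom

lemma grad_hom {t : ℝ} (ht : 0 < t) {ξ : EuclideanSpace ℝ (Fin n)} (hξ : ξ ≠ 0) :
    fderiv ℝ H (t • ξ) = fderiv ℝ H ξ := by
  have htξ : t • ξ ≠ 0 := smul_ne_zero ht.ne' hξ
  have h1 : HasFDerivAt (fun x : EuclideanSpace ℝ (Fin n) => H (t • x))
      ((fderiv ℝ H (t • ξ)).comp (t • ContinuousLinearMap.id ℝ _)) ξ :=
    (H_diff hH htξ).hasFDerivAt.comp ξ ((hasFDerivAt_id ξ).const_smul t)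
  have h2 : HasFDerivAt (fun x => t * H x) (t • fderiv ℝ H ξ) ξ :=
    (H_diff hH hξ).hasFDerivAt.const_mul t
  have heq : (fun x : EuclideanSpace ℝ (Fin n) => H (t • x)) =ᶠ[nhds ξ]
      fun x => t * H x := by
    filter_upwards [isOpen_ne.mem_nhds hξ] with x hx
    exact hhom t ht x hx
  have h3 := h1.congr_of_eventuallyEq heq.symm
  have h4 := h3.unique h2
  have key : t • fderiv ℝ H (t • ξ) = t • fderiv ℝ H ξ := by
    rw [← h4]; ext w; simp [mul_comm]
  exact smul_right_injective (EuclideanSpace ℝ (Fin n) →L[ℝ] ℝ) ht.ne' key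

lemma euler {ξ : EuclideanSpace ℝ (Fin n)} (hξ : ξ ≠ 0) : fderiv ℝ H ξ ξ = H ξ := by
  have hc : HasDerivAt (fun t : ℝ => t • ξ) ξ 1 := by
    simpa using (hasDerivAt_id (1 : ℝ)).smul_const ξ
  have h0 : HasFDerivAt H (fderiv ℝ H ξ) ((1 : ℝ) • ξ) := by
    simpa using (H_diff hH hξ).hasFDerivAt
  have h1 := h0.comp_hasDerivAt 1 hc
  have heq : (fun t : ℝ => H (t • ξ)) =ᶠ[nhds 1] fun t => t * H ξ := by
    filter_upwards [Ioi_mem_nhds one_pos] with t ht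
    exact hhom t ht ξ hξ
  have h2 := h1.congr_of_eventuallyEq heq.symm
  have h3 : HasDerivAt (fun t : ℝ => t * H ξ) (H ξ) 1 := by
    simpa using (hasDerivAt_id (1 : ℝ)).mul_const (H ξ)
  exact h2.unique h3

lemma hess_row_zero {ξ : EuclideanSpace ℝ (Fin n)} (hξ : ξ ≠ 0)
    (v : EuclideanSpace ℝ (Fin n)) : fderiv ℝ (fderiv ℝ H) ξ ξ v = 0 := by
  have hc : HasDerivAt (fun t : ℝ => t • ξ) ξ 1 := by
    simpa using (hasDerivAt_id (1 : ℝ)).smul_const ξ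
  have h0 : HasFDerivAt (fun x => fderiv ℝ H x v)
      ((fderiv ℝ (fderiv ℝ H) ξ).flip v) ((1 : ℝ) • ξ) := by
    simpa using hasFDerivAt_fderiv_apply hH hξ v
  have h1 := h0.comp_hasDerivAt 1 hc
  have heq : (fun t : ℝ => fderiv ℝ H (t • ξ) v) =ᶠ[nhds 1]
      fun _ => fderiv ℝ H ξ v := by
    filter_upwards [Ioi_mem_nhds one_pos] with t ht
    rw [grad_hom hH hhom ht hξ]
  have h2 := h1.congr_of_eventuallyEq heq.symm
  have h3 : HasDerivAt (fun _ : ℝ => fderiv ℝ H ξ v) 0 1 := hasDerivAt_const _ _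
  simpa using h2.unique h3

lemma hess_col_zero {ξ : EuclideanSpace ℝ (Fin n)} (hξ : ξ ≠ 0)
    (v : EuclideanSpace ℝ (Fin n)) : fderiv ℝ (fderiv ℝ H) ξ v ξ = 0 := by
  rw [hessH_symm hH hξ]; exact hess_row_zero hH hhom hξ v

lemma hess_hom {t : ℝ} (ht : 0 < t) {ξ : EuclideanSpace ℝ (Fin n)} (hξ : ξ ≠ 0)
    (v w : EuclideanSpace ℝ (Fin n)) :
    fderiv ℝ (fderiv ℝ H) (t • ξ) w v = t⁻¹ * fderiv ℝ (fderiv ℝ H) ξ w v := by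
  have htξ : t • ξ ≠ 0 := smul_ne_zero ht.ne' hξ
  have h1 : HasFDerivAt (fun x : EuclideanSpace ℝ (Fin n) => fderiv ℝ H (t • x) v)
      (((fderiv ℝ (fderiv ℝ H) (t • ξ)).flip v).comp (t • ContinuousLinearMap.id ℝ _)) ξ :=
    (hasFDerivAt_fderiv_apply hH htξ v).comp ξ ((hasFDerivAt_id ξ).const_smul t)
  have heq : (fun x : EuclideanSpace ℝ (Fin n) => fderiv ℝ H (t • x) v) =ᶠ[nhds ξ]
      fun x => fderiv ℝ H x v := by
    filter_upwards [isOpen_ne.mem_nhds hξ] with x hx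
    rw [grad_hom hH hhom ht hx]
  have h2 := h1.congr_of_eventuallyEq heq.symm
  have h3 := h2.unique (hasFDerivAt_fderiv_apply hH hξ v)
  have h4 := congrArg (fun L : (EuclideanSpace ℝ (Fin n)) →L[ℝ] ℝ => L w) h3
  simp only [ContinuousLinearMap.coe_comp', Function.comp_apply,
    ContinuousLinearMap.smul_apply, ContinuousLinearMap.coe_id', id_eq,
    ContinuousLinearMap.flip_apply, map_smul, smul_eq_mul] at h4
  field_simp
  linarith


section Bcomp
variable (hB : ContDiffOn ℝ 2 B (Set.Ioi 0))
  (hHpos : ∀ ξ : EuclideanSpace ℝ (Fin n), ξ ≠ 0 → 0 < H ξ)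
include hB hHpos

omit hhom in
lemma hasFDerivAt_comp {x : EuclideanSpace ℝ (Fin n)} (hx : x ≠ 0) :
    HasFDerivAt (fun y => B (H y)) (deriv B (H x) • fderiv ℝ H x) x :=
  (B_diff hB (hHpos x hx)).hasDerivAt.comp_hasFDerivAt x (H_diff hH hx).hasFDerivAt

omit hhom in
lemma fderiv_comp_apply {x : EuclideanSpace ℝ (Fin n)} (hx : x ≠ 0)
    (ζ : EuclideanSpace ℝ (Fin n)) :
    fderiv ℝ (fun y => B (H y)) x ζ = deriv B (H x) * fderiv ℝ H x ζ := by
  rw [(hasFDerivAt_comp hH hB hHpos hx).fderiv]; simp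

omit hhom in
lemma hess_comp {ξ : EuclideanSpace ℝ (Fin n)} (hξ : ξ ≠ 0)
    (ζ : EuclideanSpace ℝ (Fin n)) :
    fderiv ℝ (fun x => fderiv ℝ (fun y => B (H y)) x ζ) ξ ζ =
      deriv (deriv B) (H ξ) * (fderiv ℝ H ξ ζ) ^ 2
        + deriv B (H ξ) * fderiv ℝ (fderiv ℝ H) ξ ζ ζ := by
  have heq : (fun x => fderiv ℝ (fun y => B (H y)) x ζ) =ᶠ[nhds ξ]
      fun x => deriv B (H x) * fderiv ℝ H x ζ := by
    filter_upwards [isOpen_ne.mem_nhds hξ] with x hx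
    exact fderiv_comp_apply hH hB hHpos hx ζ
  rw [heq.fderiv_eq]
  have h1 : HasFDerivAt (fun x => deriv B (H x))
      (deriv (deriv B) (H ξ) • fderiv ℝ H ξ) ξ :=
    (derivB_diff hB (hHpos ξ hξ)).hasDerivAt.comp_hasFDerivAt ξ (H_diff hH hξ).hasFDerivAt
  have h2 := hasFDerivAt_fderiv_apply hH hξ ζ
  have h3 := h1.mul h2
  rw [show (fun x => deriv B (H x) * fderiv ℝ H x ζ) =
    (fun x => deriv B (H x)) * (fun x => fderiv ℝ H x ζ) from rfl, h3.fderiv]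
  simp only [ContinuousLinearMap.add_apply, ContinuousLinearMap.smul_apply,
    ContinuousLinearMap.flip_apply, smul_eq_mul]
  ring

end Bcomp

end HSmooth

end HessAux

/-- Characterization of positive definiteness of `Hess (B ∘ H)`: it is positive
definite at every `ξ ≠ 0` iff the restriction of `Hess H(ξ)` to `ξ^⊥` is positive
definite for every unit vector `ξ`. -/
theorem hess_comp_posdef_iff
    (n : ℕ) (H : EuclideanSpace ℝ (Fin n) → ℝ) (B : ℝ → ℝ)
    (hB : ContDiffOn ℝ 2 B (Set.Ioi 0))
    (hBpos : ∀ t : ℝ, 0 < t → 0 < B t ∧ 0 < deriv B t ∧ 0 < deriv (deriv B) t)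
    (hH : ContDiffOn ℝ 2 H {x : EuclideanSpace ℝ (Fin n) | x ≠ 0})
    (hhom : ∀ t : ℝ, 0 < t → ∀ ξ : EuclideanSpace ℝ (Fin n), ξ ≠ 0 →
      H (t • ξ) = t * H ξ)
    (hHpos : ∀ ξ : EuclideanSpace ℝ (Fin n), ξ ≠ 0 → 0 < H ξ) :
    (∀ ξ : EuclideanSpace ℝ (Fin n), ξ ≠ 0 →
        ∀ ζ : EuclideanSpace ℝ (Fin n), ζ ≠ 0 →
          0 < fderiv ℝ (fun x => fderiv ℝ (fun y => B (H y)) x ζ) ξ ζ) ↔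
      (∀ ξ : EuclideanSpace ℝ (Fin n), ‖ξ‖ = 1 →
        ∀ V : EuclideanSpace ℝ (Fin n), ⟪V, ξ⟫ = 0 → V ≠ 0 →
          0 < fderiv ℝ (fun x => fderiv ℝ H x V) ξ V) := by
  constructor
  · intro hpos ξ hξ1 V hV hV0
    have hξ : ξ ≠ 0 := fun h => by simp [h] at hξ1
    have hHξ : 0 < H ξ := hHpos ξ hξ
    set c := fderiv ℝ H ξ V with hc
    set s := c / H ξ with hs
    set ζ := V - s • ξ with hζdef
    have hζ : ζ ≠ 0 := by
      intro h
      have hVs : V = s • ξ := by rw [hζdef, sub_eq_zero] at h; exact h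
      have h2 : ⟪V, ξ⟫ = s := by
        rw [hVs, real_inner_smul_left, real_inner_self_eq_norm_sq, hξ1]; ring
      have hs0 : s = 0 := by rw [← h2]; exact hV
      exact hV0 (by rw [hVs, hs0, zero_smul])
    have h := hpos ξ hξ ζ hζ
    rw [hess_comp hH hB hHpos hξ ζ] at h
    have hDζ : fderiv ℝ H ξ ζ = 0 := by
      rw [hζdef, map_sub, map_smul, euler hH hhom hξ, smul_eq_mul, ← hc, hs]
      field_simp
      ring
    have hAζ : fderiv ℝ (fderiv ℝ H) ξ ζ ζ = fderiv ℝ (fderiv ℝ H) ξ V V := by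
      rw [hζdef]
      simp [map_sub, map_smul, ContinuousLinearMap.sub_apply,
        ContinuousLinearMap.smul_apply, smul_eq_mul,
        hess_row_zero hH hhom hξ, hess_col_zero hH hhom hξ]
    rw [hDζ, hAζ] at h
    rw [hessH_eq hH hξ V]
    simp only [ContinuousLinearMap.flip_apply]
    have hB1 := (hBpos (H ξ) hHξ).2.1
    nlinarith
  · intro hpos ξ hξ ζ hζ
    have hr : (0:ℝ) < ‖ξ‖ := norm_pos_iff.mpr hξ
    set u : EuclideanSpace ℝ (Fin n) := ‖ξ‖⁻¹ • ξ with hu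
    have hu1 : ‖u‖ = 1 := norm_smul_inv_norm hξ
    have hu0 : u ≠ 0 := fun h => by simp [h] at hu1
    have hξu : ξ = ‖ξ‖ • u := (smul_inv_smul₀ hr.ne' ξ).symm
    have hHξ : 0 < H ξ := hHpos ξ hξ
    set a := ⟪ζ, u⟫ with ha
    set V := ζ - a • u with hV
    have hζV : ζ = V + a • u := by rw [hV]; abel
    have hVu : ⟪V, u⟫ = 0 := by
      rw [hV, inner_sub_left, real_inner_smul_left, real_inner_self_eq_norm_sq, hu1]
      ring
    have hgrad : fderiv ℝ H ξ = fderiv ℝ H u := by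
      rw [hξu]; exact grad_hom hH hhom hr hu0
    have hDζ : fderiv ℝ H ξ ζ = fderiv ℝ H u V + a * H u := by
      rw [hgrad, hζV, map_add, map_smul, smul_eq_mul, euler hH hhom hu0]
    have hAξ : fderiv ℝ (fderiv ℝ H) ξ ζ ζ = ‖ξ‖⁻¹ * fderiv ℝ (fderiv ℝ H) u ζ ζ := by
      have h := hess_hom hH hhom hr hu0 ζ ζ
      rw [← hξu] at h; exact h
    have hAu : fderiv ℝ (fderiv ℝ H) u ζ ζ = fderiv ℝ (fderiv ℝ H) u V V := by
      rw [hζV]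
      simp [map_add, map_smul, ContinuousLinearMap.add_apply,
        ContinuousLinearMap.smul_apply, smul_eq_mul,
        hess_row_zero hH hhom hu0, hess_col_zero hH hhom hu0]
    rw [hess_comp hH hB hHpos hξ ζ, hAξ, hAu, hDζ]
    obtain ⟨hB0, hB1, hB2⟩ := hBpos (H ξ) hHξ
    by_cases hV0 : V = 0
    · have haz : a ≠ 0 := by
        intro h; exact hζ (by rw [hζV, hV0, h, zero_smul, add_zero])
      have hAV : fderiv ℝ (fderiv ℝ H) u V V = 0 := by rw [hV0]; simp
      have hDV : fderiv ℝ H u V = 0 := by rw [hV0]; simp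
      rw [hAV, hDV]
      have hHu : 0 < H u := hHpos u hu0
      have hne : (0 : ℝ) + a * H u ≠ 0 := by
        rw [zero_add]; exact mul_ne_zero haz hHu.ne'
      have hsq : 0 < ((0 : ℝ) + a * H u) ^ 2 :=
        lt_of_le_of_ne (sq_nonneg _) (Ne.symm (pow_ne_zero 2 hne))
      nlinarith [mul_pos hB2 hsq]
    · have hAV := hpos u hu1 V hVu hV0
      rw [hessH_eq hH hu0 V] at hAV
      simp only [ContinuousLinearMap.flip_apply] at hAV
      have hrinv : (0:ℝ) < ‖ξ‖⁻¹ := inv_pos.mpr hr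
      have f1 : 0 ≤ deriv (deriv B) (H ξ) * (fderiv ℝ H u V + a * H u) ^ 2 :=
        mul_nonneg hB2.le (sq_nonneg _)
      have f2 : 0 < deriv B (H ξ) * (‖ξ‖⁻¹ * fderiv ℝ (fderiv ℝ H) u V V) :=
        mul_pos hB1 (mul_pos hrinv hAV)
      linarith
end

section
/- Let B ∈ C²((0,∞)) with B, B', B'' > 0 on (0,∞), and H ∈ C²(ℝⁿ \ {0}) positively homogeneous of degree 1 with H > 0 away from 0. If Hess(B ∘ H) is positive definite on ℝⁿ \ {0}, then Hess H(ξ) is positive semidefinite for every ξ ≠ 0, i.e. ∑ᵢⱼ Hᵢⱼ(ξ) ηᵢ ηⱼ ≥ 0 for all η ∈ ℝⁿ. -/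
/-- If `Hess (B ∘ H)` is positive definite on `ℝⁿ \ {0}`, then `Hess H(ξ)` is
positive semidefinite for every `ξ ≠ 0`. -/
theorem hess_H_posSemidef
    (n : ℕ) (H : EuclideanSpace ℝ (Fin n) → ℝ) (B : ℝ → ℝ)
    (hB : ContDiffOn ℝ 2 B (Set.Ioi 0))
    (hBpos : ∀ t : ℝ, 0 < t → 0 < B t ∧ 0 < deriv B t ∧ 0 < deriv (deriv B) t)
    (hH : ContDiffOn ℝ 2 H {x : EuclideanSpace ℝ (Fin n) | x ≠ 0})
    (hhom : ∀ t : ℝ, 0 < t → ∀ ξ : EuclideanSpace ℝ (Fin n), ξ ≠ 0 →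
      H (t • ξ) = t * H ξ)
    (hHpos : ∀ ξ : EuclideanSpace ℝ (Fin n), ξ ≠ 0 → 0 < H ξ)
    (hposdef : ∀ ξ : EuclideanSpace ℝ (Fin n), ξ ≠ 0 →
      ∀ ζ : EuclideanSpace ℝ (Fin n), ζ ≠ 0 →
        0 < fderiv ℝ (fun x => fderiv ℝ (fun y => B (H y)) x ζ) ξ ζ) :
    ∀ ξ : EuclideanSpace ℝ (Fin n), ξ ≠ 0 →
      ∀ η : EuclideanSpace ℝ (Fin n),
        0 ≤ fderiv ℝ (fun x => fderiv ℝ H x η) ξ η := by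
  intro ξ hξ η
  have hU : IsOpen {x : EuclideanSpace ℝ (Fin n) | x ≠ 0} :=
    isOpen_compl_singleton
  -- basic differentiability facts
  have hCA : ∀ x : EuclideanSpace ℝ (Fin n), x ≠ 0 → ContDiffAt ℝ 2 H x :=
    fun x hx => hH.contDiffAt (hU.mem_nhds hx)
  have hdH : ∀ x : EuclideanSpace ℝ (Fin n), x ≠ 0 → DifferentiableAt ℝ H x :=
    fun x hx => (hCA x hx).differentiableAt (by norm_num)
  have hd2 : DifferentiableAt ℝ (fderiv ℝ H) ξ := by
    have : ContDiffAt ℝ 1 (fderiv ℝ H) ξ := (hCA ξ hξ).fderiv_right (by norm_num)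
    exact this.differentiableAt (by norm_num)
  set f'' := fderiv ℝ (fderiv ℝ H) ξ with hf''
  -- Euler identity
  have euler : ∀ x : EuclideanSpace ℝ (Fin n), x ≠ 0 → fderiv ℝ H x x = H x := by
    intro x hx
    have hsm : HasDerivAt (fun t : ℝ => t • x) x 1 := by
      simpa using (hasDerivAt_id (1:ℝ)).smul_const x
    have h1 : HasDerivAt (fun t : ℝ => H (t • x)) (fderiv ℝ H x x) 1 := by
      have := ((hdH x hx).hasFDerivAt.comp_hasDerivAt_of_eq 1 hsm (by simp))
      exact this
    have h2 : HasDerivAt (fun t : ℝ => t * H x) (H x) 1 := by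
      simpa using (hasDerivAt_id (1:ℝ)).mul_const (H x)
    have heq : (fun t : ℝ => t * H x) =ᶠ[nhds (1:ℝ)] fun t => H (t • x) := by
      filter_upwards [Ioi_mem_nhds (show (0:ℝ) < 1 by norm_num)] with t ht
      exact (hhom t ht x hx).symm
    exact ((h2.congr_of_eventuallyEq heq.symm).unique h1).symm
  -- second derivative kills ξ on the right
  have hright : ∀ v, f'' v ξ = 0 := by
    intro v
    have hev : (fun x => fderiv ℝ H x x) =ᶠ[nhds ξ] H := by
      filter_upwards [hU.mem_nhds hξ] with x hx
      exact euler x hx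
    have h1 : fderiv ℝ (fun x => fderiv ℝ H x x) ξ = fderiv ℝ H ξ := hev.fderiv_eq
    have h2 : fderiv ℝ (fun x => fderiv ℝ H x x) ξ =
        (fderiv ℝ H ξ).comp (fderiv ℝ (fun x => x) ξ) + f''.flip ξ :=
      fderiv_clm_apply hd2 differentiableAt_fun_id
    have := congrFun (congrArg DFunLike.coe (h1.symm.trans h2)) v
    simp only [ContinuousLinearMap.add_apply, ContinuousLinearMap.coe_comp',
      Function.comp_apply, ContinuousLinearMap.flip_apply, fderiv_id', ContinuousLinearMap.coe_id',
      id] at this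
    linarith
  -- symmetry of second derivative
  have hsymm : ∀ v w, f'' v w = f'' w v := by
    intro v w
    have hev : ∀ᶠ y in nhds ξ, HasFDerivAt H (fderiv ℝ H y) y := by
      filter_upwards [hU.mem_nhds hξ] with x hx
      exact (hdH x hx).hasFDerivAt
    exact second_derivative_symmetric_of_eventually hev hd2.hasFDerivAt v w
  -- the hessian quadratic form equals f''
  have happly : ∀ ζ : EuclideanSpace ℝ (Fin n),
      fderiv ℝ (fun x => fderiv ℝ H x ζ) ξ = f''.flip ζ := by
    intro ζ
    have := fderiv_clm_apply hd2 (differentiableAt_const ζ)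
    simpa using this
  -- decompose η
  have hHξ : 0 < H ξ := hHpos ξ hξ
  set c : ℝ := fderiv ℝ H ξ η / H ξ with hc
  set w : EuclideanSpace ℝ (Fin n) := η - c • ξ with hwdef
  have hw0 : fderiv ℝ H ξ w = 0 := by
    rw [hwdef, map_sub, map_smul, euler ξ hξ]
    rw [hc, smul_eq_mul, div_mul_cancel₀ _ hHξ.ne', sub_self]
  have hηw : f'' η η = f'' w w := by
    have hη : η = w + c • ξ := by rw [hwdef]; abel
    rw [hη]
    simp only [map_add, map_smul, ContinuousLinearMap.add_apply,
      ContinuousLinearMap.smul_apply, smul_eq_mul]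
    rw [hright w, hsymm ξ w, hright w, hright ξ]
    ring
  rw [happly η]
  simp only [ContinuousLinearMap.flip_apply]
  rw [hηw]
  rcases eq_or_ne w 0 with hw | hw
  · simp [hw]
  -- now w ≠ 0 : use positive definiteness of Hess (B ∘ H)
  have hBH : ∀ x : EuclideanSpace ℝ (Fin n), x ≠ 0 →
      fderiv ℝ (fun y => B (H y)) x = deriv B (H x) • fderiv ℝ H x := by
    intro x hx
    have hBx : HasDerivAt B (deriv B (H x)) (H x) :=
      (((hB.contDiffAt (Ioi_mem_nhds (hHpos x hx))).differentiableAt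
        (by norm_num))).hasDerivAt
    exact (hBx.comp_hasFDerivAt x (hdH x hx).hasFDerivAt).fderiv
  have hev2 : (fun x => fderiv ℝ (fun y => B (H y)) x w) =ᶠ[nhds ξ]
      fun x => deriv B (H x) * fderiv ℝ H x w := by
    filter_upwards [hU.mem_nhds hξ] with x hx
    rw [hBH x hx]; simp
  have hu : DifferentiableAt ℝ (fun x => deriv B (H x)) ξ := by
    have hdB : DifferentiableAt ℝ (deriv B) (H ξ) :=
      ((hB.deriv_of_isOpen (m := 1) isOpen_Ioi (by norm_num)).differentiableOn (by norm_num)).differentiableAt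
        (Ioi_mem_nhds hHξ)
    exact hdB.comp ξ (hdH ξ hξ)
  have hv : DifferentiableAt ℝ (fun x => fderiv ℝ H x w) ξ :=
    hd2.clm_apply (differentiableAt_const w)
  have hkey : fderiv ℝ (fun x => fderiv ℝ (fun y => B (H y)) x w) ξ w
      = deriv B (H ξ) * f'' w w := by
    rw [hev2.fderiv_eq, fderiv_fun_mul hu hv]
    have h1 : fderiv ℝ (fun x => fderiv ℝ H x w) ξ w = f'' w w := by
      rw [happly w]; rfl
    simp only [ContinuousLinearMap.add_apply, ContinuousLinearMap.smul_apply, smul_eq_mul]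
    rw [h1, hw0]
    ring
  have hpos := hposdef ξ hξ w hw
  rw [hkey] at hpos
  have hB' : 0 < deriv B (H ξ) := (hBpos (H ξ) hHξ).2.1
  nlinarith [mul_pos_iff.mp hpos]
end

section
/- Let H ∈ C²(ℝⁿ \ {0}) be positively homogeneous of degree 1 with H > 0 away from 0, and B ∈ C¹([0,∞)) ∩ C²((0,∞)) with B(0) = B'(0) = 0. If the pure second derivative ∂²(B∘H)/∂ξ₁² extends continuously to 0, then B is C² up to 0 and B''(0) = H(e₁)⁻² · ∂²(B∘H)/∂ξ₁²(0). -/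
open Set Filter Topology

/-- If the pure second derivative `∂²(B∘H)/∂ξ₁²` extends continuously to `0` with
limit `L`, then `B` is `C²` up to `0` and `B''(0) = H(e₁)⁻² L`. -/
theorem B_C2_at_zero
    (n : ℕ) (H : EuclideanSpace ℝ (Fin (n + 1)) → ℝ) (B : ℝ → ℝ) (L : ℝ)
    (hH : ContDiffOn ℝ 2 H {x : EuclideanSpace ℝ (Fin (n + 1)) | x ≠ 0})
    (hhom : ∀ t : ℝ, 0 < t → ∀ ξ : EuclideanSpace ℝ (Fin (n + 1)), ξ ≠ 0 →
      H (t • ξ) = t * H ξ)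
    (hHpos : ∀ ξ : EuclideanSpace ℝ (Fin (n + 1)), ξ ≠ 0 → 0 < H ξ)
    (hB1 : ContDiffOn ℝ 1 B (Set.Ici 0))
    (hB2 : ContDiffOn ℝ 2 B (Set.Ioi 0))
    (hB0 : B 0 = 0) (hB'0 : derivWithin B (Set.Ici 0) 0 = 0)
    (hlim : Filter.Tendsto
      (fun ξ : EuclideanSpace ℝ (Fin (n + 1)) =>
        fderiv ℝ (fun x => fderiv ℝ (fun y => B (H y)) x
            (EuclideanSpace.single 0 1)) ξ (EuclideanSpace.single 0 1))
      (nhdsWithin 0 {x : EuclideanSpace ℝ (Fin (n + 1)) | x ≠ 0}) (nhds L)) :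
    ContDiffOn ℝ 2 B (Set.Ici 0) ∧
      derivWithin (derivWithin B (Set.Ici 0)) (Set.Ici 0) 0
        = (H (EuclideanSpace.single 0 1)) ^ (-2 : ℤ) * L := by
  set e : EuclideanSpace ℝ (Fin (n + 1)) := EuclideanSpace.single 0 1 with he
  have he0 : e ≠ 0 := by
    intro h
    have : ‖e‖ = 0 := by rw [h, norm_zero]
    rw [he, EuclideanSpace.norm_single] at this
    norm_num at this
  set a : ℝ := H e with ha_def
  have ha : 0 < a := hHpos e he0
  set U : Set (EuclideanSpace ℝ (Fin (n + 1))) := {x | x ≠ 0} with hU_def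
  have hU : IsOpen U := isOpen_ne
  set f : EuclideanSpace ℝ (Fin (n + 1)) → ℝ := fun y => B (H y) with hf_def
  have hf : ContDiffOn ℝ 2 f U := hB2.comp hH fun x hx => hHpos x hx
  have hfAt : ∀ x : EuclideanSpace ℝ (Fin (n + 1)), x ≠ 0 → ContDiffAt ℝ 2 f x :=
    fun x hx => hf.contDiffAt (hU.mem_nhds hx)
  -- Step A
  have stepA : ∀ s : ℝ, 0 < s → fderiv ℝ f (s • e) e = a * deriv B (a * s) := by
    intro s hs
    have hse : s • e ≠ 0 := smul_ne_zero hs.ne' he0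
    have hfd : HasFDerivAt f (fderiv ℝ f (s • e)) (s • e) :=
      ((hfAt _ hse).differentiableAt (by norm_num)).hasFDerivAt
    have hψ : HasDerivAt (fun u : ℝ => u • e) e s := by
      simpa using (hasDerivAt_id s).smul_const e
    have hcomp : HasDerivAt (fun u : ℝ => f (u • e)) (fderiv ℝ f (s • e) e) s :=
      by have h := hfd.comp_hasDerivAt s hψ; exact h
    have heq : (fun u : ℝ => B (a * u)) =ᶠ[𝓝 s] (fun u : ℝ => f (u • e)) := by
      filter_upwards [Ioi_mem_nhds hs] with u hu
      simp only [hf_def, hhom u hu e he0, mul_comm, ha_def]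
    have hcomp' : HasDerivAt (fun u : ℝ => B (a * u)) (fderiv ℝ f (s • e) e) s :=
      hcomp.congr_of_eventuallyEq heq
    have hBd : DifferentiableAt ℝ B (a * s) :=
      (hB2.contDiffAt (Ioi_mem_nhds (by positivity))).differentiableAt (by norm_num)
    have hmul : HasDerivAt (fun u : ℝ => a * u) a s := by
      simpa using (hasDerivAt_id s).const_mul a
    have hBa : HasDerivAt (fun u : ℝ => B (a * u)) (deriv B (a * s) * a) s :=
      hBd.hasDerivAt.comp s hmul
    rw [hcomp'.unique hBa, mul_comm]
  -- Step B
  set G : EuclideanSpace ℝ (Fin (n + 1)) → ℝ := fun x => fderiv ℝ f x e with hG_def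
  have hG1 : ∀ x : EuclideanSpace ℝ (Fin (n + 1)), x ≠ 0 → ContDiffAt ℝ 1 G x := by
    intro x hx
    exact ((hfAt x hx).fderiv_right (by norm_num)).clm_apply contDiffAt_const
  have hBd2 : ContDiffOn ℝ 1 (deriv B) (Ioi 0) :=
    hB2.deriv_of_isOpen isOpen_Ioi (by norm_num)
  have stepB : ∀ t : ℝ, 0 < t →
      fderiv ℝ G (t • e) e = a ^ 2 * deriv (deriv B) (a * t) := by
    intro t ht
    have hte : t • e ≠ 0 := smul_ne_zero ht.ne' he0
    have hGd : HasFDerivAt G (fderiv ℝ G (t • e)) (t • e) :=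
      ((hG1 _ hte).differentiableAt (by norm_num)).hasFDerivAt
    have hψ : HasDerivAt (fun u : ℝ => u • e) e t := by
      simpa using (hasDerivAt_id t).smul_const e
    have hcomp : HasDerivAt (fun u : ℝ => G (u • e)) (fderiv ℝ G (t • e) e) t :=
      by have h := hGd.comp_hasDerivAt t hψ; exact h
    have heq : (fun u : ℝ => a * deriv B (a * u)) =ᶠ[𝓝 t] (fun u : ℝ => G (u • e)) := by
      filter_upwards [Ioi_mem_nhds ht] with u hu
      exact (stepA u hu).symm
    have hcomp' : HasDerivAt (fun u : ℝ => a * deriv B (a * u)) (fderiv ℝ G (t • e) e) t :=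
      hcomp.congr_of_eventuallyEq heq
    have hDBd : DifferentiableAt ℝ (deriv B) (a * t) :=
      (hBd2.contDiffAt (Ioi_mem_nhds (by positivity))).differentiableAt (by norm_num)
    have hmul : HasDerivAt (fun u : ℝ => a * u) a t := by
      simpa using (hasDerivAt_id t).const_mul a
    have hchain : HasDerivAt (fun u : ℝ => a * deriv B (a * u))
        (a * (deriv (deriv B) (a * t) * a)) t :=
      (hDBd.hasDerivAt.comp t hmul).const_mul a
    rw [hcomp'.unique hchain]; ring
  -- Step C : limit of second derivative
  have hray : Tendsto (fun t : ℝ => t • e) (𝓝[>] (0:ℝ)) (𝓝[U] 0) := by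
    rw [tendsto_nhdsWithin_iff]
    constructor
    · have : Tendsto (fun t : ℝ => t • e) (𝓝 0) (𝓝 ((0:ℝ) • e)) :=
        (continuous_id.smul continuous_const).tendsto 0
      rw [zero_smul] at this
      exact this.mono_left nhdsWithin_le_nhds
    · filter_upwards [self_mem_nhdsWithin] with t ht
      exact smul_ne_zero (ne_of_gt ht) he0
  have hL1 : Tendsto (fun t : ℝ => a ^ 2 * deriv (deriv B) (a * t)) (𝓝[>] (0:ℝ)) (𝓝 L) := by
    refine (hlim.comp hray).congr' ?_
    filter_upwards [self_mem_nhdsWithin] with t ht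
    exact (stepB t ht)
  have hdiv : Tendsto (fun s : ℝ => s / a) (𝓝[>] (0:ℝ)) (𝓝[>] (0:ℝ)) := by
    rw [tendsto_nhdsWithin_iff]
    constructor
    · have : Tendsto (fun s : ℝ => s / a) (𝓝 0) (𝓝 (0 / a)) :=
        (continuous_id.div_const a).tendsto 0
      rw [zero_div] at this
      exact this.mono_left nhdsWithin_le_nhds
    · filter_upwards [self_mem_nhdsWithin] with s hs
      exact div_pos hs ha
  set M : ℝ := (a ^ 2)⁻¹ * L with hM_def
  have hL2 : Tendsto (fun s : ℝ => deriv (deriv B) s) (𝓝[>] (0:ℝ)) (𝓝 M) := by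
    have h1 : Tendsto (fun s : ℝ => a ^ 2 * deriv (deriv B) (a * (s / a))) (𝓝[>] (0:ℝ)) (𝓝 L) :=
      hL1.comp hdiv
    have h2 : Tendsto (fun s : ℝ => (a ^ 2)⁻¹ * (a ^ 2 * deriv (deriv B) (a * (s / a))))
        (𝓝[>] (0:ℝ)) (𝓝 ((a ^ 2)⁻¹ * L)) := h1.const_mul _
    refine h2.congr fun s => ?_
    rw [mul_div_cancel₀ s ha.ne']
    field_simp
  -- Step D : one-dimensional analysis
  set B₁ : ℝ → ℝ := derivWithin B (Set.Ici 0) with hB₁_def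
  have hB₁eq : ∀ x : ℝ, 0 < x → B₁ x = deriv B x := fun x hx =>
    derivWithin_of_mem_nhds (mem_of_superset (Ioi_mem_nhds hx) Ioi_subset_Ici_self)
  have hB₁eqev : ∀ x : ℝ, 0 < x → B₁ =ᶠ[𝓝 x] deriv B := by
    intro x hx
    filter_upwards [Ioi_mem_nhds hx] with y hy
    exact hB₁eq y hy
  have hB₁cont : ContinuousOn B₁ (Ici 0) :=
    hB1.continuousOn_derivWithin (uniqueDiffOn_Ici 0) le_rfl
  have hB₁diffAt : ∀ x : ℝ, 0 < x → DifferentiableAt ℝ B₁ x := by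
    intro x hx
    have : DifferentiableAt ℝ (deriv B) x :=
      (hBd2.contDiffAt (Ioi_mem_nhds hx)).differentiableAt (by norm_num)
    exact this.congr_of_eventuallyEq (hB₁eqev x hx)
  have hderivB₁ : ∀ x : ℝ, 0 < x → deriv B₁ x = deriv (deriv B) x := fun x hx =>
    (hB₁eqev x hx).deriv_eq
  have hderiv0 : HasDerivWithinAt B₁ M (Ici 0) 0 := by
    refine hasDerivWithinAt_Ici_of_tendsto_deriv (s := Ioi 0)
      (fun x hx => (hB₁diffAt x hx).differentiableWithinAt)
      ((hB₁cont 0 self_mem_Ici).mono Ioi_subset_Ici_self) self_mem_nhdsWithin ?_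
    refine hL2.congr' ?_
    filter_upwards [self_mem_nhdsWithin] with x hx
    exact (hderivB₁ x hx).symm
  have hB₁diff : DifferentiableOn ℝ B₁ (Ici 0) := by
    intro x hx
    rcases eq_or_lt_of_le (mem_Ici.mp hx) with h | h
    · rw [← h]; exact hderiv0.differentiableWithinAt
    · exact (hB₁diffAt x h).differentiableWithinAt
  have hval : derivWithin B₁ (Ici 0) 0 = M :=
    hderiv0.derivWithin (uniqueDiffOn_Ici 0 0 self_mem_Ici)
  have hvalx : ∀ x : ℝ, 0 < x → derivWithin B₁ (Ici 0) x = deriv (deriv B) x := by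
    intro x hx
    rw [derivWithin_of_mem_nhds (mem_of_superset (Ioi_mem_nhds hx) Ioi_subset_Ici_self)]
    exact hderivB₁ x hx
  have hDDcont : ContinuousOn (deriv (deriv B)) (Ioi 0) :=
    hBd2.continuousOn_deriv_of_isOpen isOpen_Ioi le_rfl
  have hcont2 : ContinuousOn (derivWithin B₁ (Ici 0)) (Ici 0) := by
    intro x hx
    rcases eq_or_lt_of_le (mem_Ici.mp hx) with h | h
    · rw [← h]
      have : Tendsto (derivWithin B₁ (Ici 0)) (𝓝[Ici 0] (0:ℝ)) (𝓝 M) := by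
        have hfil : 𝓝[Ici (0:ℝ)] 0 = pure 0 ⊔ 𝓝[>] (0:ℝ) := by
          rw [← Ioi_insert, nhdsWithin_insert]
        rw [hfil, tendsto_sup]
        constructor
        · rw [tendsto_pure_left]
          intro s hs
          rw [hval]
          exact mem_of_mem_nhds hs
        · refine hL2.congr' ?_
          filter_upwards [self_mem_nhdsWithin] with y hy
          exact (hvalx y hy).symm
      unfold ContinuousWithinAt
      rw [hval]
      exact this
    · have hmem : Ioi (0:ℝ) ∈ 𝓝[Ici 0] x :=
        mem_nhdsWithin_of_mem_nhds (Ioi_mem_nhds h)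
      refine ContinuousWithinAt.congr_of_eventuallyEq
        (((hDDcont x h).mono_of_mem_nhdsWithin hmem).mono_of_mem_nhdsWithin ?_) ?_ (hvalx x h)
      · exact self_mem_nhdsWithin
      · filter_upwards [hmem] with y hy
        exact hvalx y hy
  constructor
  · rw [show (2 : WithTop ℕ∞) = 1 + 1 from rfl,
      contDiffOn_succ_iff_derivWithin (uniqueDiffOn_Ici 0)]
    refine ⟨hB1.differentiableOn (by norm_num), by simp, ?_⟩
    rw [show (1 : WithTop ℕ∞) = 0 + 1 from rfl,
      contDiffOn_succ_iff_derivWithin (uniqueDiffOn_Ici 0)]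
    exact ⟨hB₁diff, by simp, contDiffOn_zero.2 hcont2⟩
  · rw [hval, hM_def]
    congr 1
end
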